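/- Assume that d_{1,-1}, d_{1,0}, d_{1,1} are not all zero, d_{-1,-1}, d_{-1,0}, d_{-1,1} are not all zero, d_{-1,1}, d_{0,1}, d_{1,1} are not all zero, and d_{-1,-1}, d_{0,-1}, d_{1,-1} are not all zero. If K(x,y,t) = -f₁(x,y)·f₂(x,y) with f₁, f₂ ∈ ℂ[x,y] nonconstant, then there exists c ∈ ℂ \ {0} such that, setting g₁ = c·f₁ and g₂ = c⁻¹·f₂ (so that K = -g₁·g₂), one of the following holds: (i) the coefficientwise complex conjugate of g₁ equals g₂; (ii) the coefficientwise complex conjugate of g₁ equals -g₂; (iii) g₁ and g₂ both have all their coefficients in ℝ. -/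

import Mathlib

open MvPolynomial

noncomputable section

variable (d : ℤ → ℤ → ℝ) (t : ℝ)

/-- The kernel polynomial `K(x,y,t) = xy(1 - t·Σ_{(i,j)∈{-1,0,1}²} d_{i,j} x^i y^j)`
as an element of `ℂ[x,y] = MvPolynomial (Fin 2) ℂ` (variable `0` is `x`, variable `1` is `y`). -/
def kernelK : MvPolynomial (Fin 2) ℂ :=
  X 0 * X 1 - C ((t : ℝ) : ℂ) *
    ∑ i ∈ Finset.range 3, ∑ j ∈ Finset.range 3,
      C ((d ((i : ℤ) - 1) ((j : ℤ) - 1) : ℝ) : ℂ) * X 0 ^ i * X 1 ^ j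

/-- The standing hypotheses: the weights `d_{i,j}` for `(i,j) ∈ {-1,0,1}²` lie in `[0,1]`
and sum to `1`, `t ∈ (0,1)`, and `t` is transcendental over `ℚ(d_{i,j})`, i.e. no nonzero
polynomial with coefficients in the subfield of `ℝ` generated by the `d_{i,j}` vanishes at `t`. -/
def WalkHyp : Prop :=
  (∀ i ∈ ({-1, 0, 1} : Set ℤ), ∀ j ∈ ({-1, 0, 1} : Set ℤ), 0 ≤ d i j ∧ d i j ≤ 1) ∧
  (∑ i ∈ ({-1, 0, 1} : Finset ℤ), ∑ j ∈ ({-1, 0, 1} : Finset ℤ), d i j = 1) ∧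
  (0 < t ∧ t < 1) ∧
  (∀ p : Polynomial ℝ,
      (∀ n, p.coeff n ∈
        Subfield.closure
          {x : ℝ | ∃ i ∈ ({-1, 0, 1} : Set ℤ), ∃ j ∈ ({-1, 0, 1} : Set ℤ), x = d i j}) →
      Polynomial.eval t p = 0 → p = 0)

/-- The model is degenerate if `K` is reducible in `ℂ[x,y]`, or has degree `≤ 1` in `x`,
or degree `≤ 1` in `y`. -/
def Degenerate : Prop :=
  ¬ Irreducible (kernelK d t) ∨
    degreeOf 0 (kernelK d t) ≤ 1 ∨ degreeOf 1 (kernelK d t) ≤ 1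

/-- The bihomogenized kernel
`K̄(x₀,x₁,y₀,y₁) = x₀x₁y₀y₁ - t Σ_{i,j=0}^{2} d_{i-1,j-1} x₀^i x₁^{2-i} y₀^j y₁^{2-j}`,
with variables `0 ↦ x₀`, `1 ↦ x₁`, `2 ↦ y₀`, `3 ↦ y₁`. -/
def kernelKbar : MvPolynomial (Fin 4) ℂ :=
  X 0 * X 1 * X 2 * X 3 - C ((t : ℝ) : ℂ) *
    ∑ i ∈ Finset.range 3, ∑ j ∈ Finset.range 3,
      C ((d ((i : ℤ) - 1) ((j : ℤ) - 1) : ℝ) : ℂ) *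
        X 0 ^ i * X 1 ^ (2 - i) * X 2 ^ j * X 3 ^ (2 - j)

/-- `([a:b],[c:e])` lies on the kernel curve `Ē_t ⊆ ℙ¹(ℂ)×ℙ¹(ℂ)`. -/
def OnKernelCurve (a b c e : ℂ) : Prop :=
  eval ![a, b, c, e] (kernelKbar d t) = 0

/-- `([a:b],[c:e])` is a singular point of the kernel curve `Ē_t`: it lies on `Ē_t`
and all four partial derivatives of `K̄` vanish there. -/
def SingularAt (a b c e : ℂ) : Prop :=
  OnKernelCurve d t a b c e ∧
    ∀ k : Fin 4, eval ![a, b, c, e] (pderiv k (kernelKbar d t)) = 0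

/-- `Ā₁(x₀,x₁)`: the coefficient of `y₀²` in `K̄`. -/
def Abar1 : MvPolynomial (Fin 2) ℂ :=
  -(C ((t : ℝ) : ℂ)) *
    (C ((d (-1) 1 : ℝ) : ℂ) * X 1 ^ 2 + C ((d 0 1 : ℝ) : ℂ) * X 0 * X 1 +
      C ((d 1 1 : ℝ) : ℂ) * X 0 ^ 2)

/-- `B̄₁(x₀,x₁)`: the coefficient of `y₀y₁` in `K̄`. -/
def Bbar1 : MvPolynomial (Fin 2) ℂ :=
  X 0 * X 1 - C ((t : ℝ) : ℂ) *
    (C ((d (-1) 0 : ℝ) : ℂ) * X 1 ^ 2 + C ((d 0 0 : ℝ) : ℂ) * X 0 * X 1 +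
      C ((d 1 0 : ℝ) : ℂ) * X 0 ^ 2)

/-- `C̄₁(x₀,x₁)`: the coefficient of `y₁²` in `K̄`. -/
def Cbar1 : MvPolynomial (Fin 2) ℂ :=
  -(C ((t : ℝ) : ℂ)) *
    (C ((d (-1) (-1) : ℝ) : ℂ) * X 1 ^ 2 + C ((d 0 (-1) : ℝ) : ℂ) * X 0 * X 1 +
      C ((d 1 (-1) : ℝ) : ℂ) * X 0 ^ 2)

/-- The discriminant `Δ₁(x₀,x₁) = B̄₁² - 4Ā₁C̄₁`, homogeneous of degree 4. -/
def Delta1 : MvPolynomial (Fin 2) ℂ :=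
  Bbar1 d t ^ 2 - 4 * Abar1 d t * Cbar1 d t

/-- `Ā₂(y₀,y₁)`: the coefficient of `x₀²` in `K̄`. -/
def Abar2 : MvPolynomial (Fin 2) ℂ :=
  -(C ((t : ℝ) : ℂ)) *
    (C ((d 1 (-1) : ℝ) : ℂ) * X 1 ^ 2 + C ((d 1 0 : ℝ) : ℂ) * X 0 * X 1 +
      C ((d 1 1 : ℝ) : ℂ) * X 0 ^ 2)

/-- `B̄₂(y₀,y₁)`: the coefficient of `x₀x₁` in `K̄`. -/
def Bbar2 : MvPolynomial (Fin 2) ℂ :=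
  X 0 * X 1 - C ((t : ℝ) : ℂ) *
    (C ((d 0 (-1) : ℝ) : ℂ) * X 1 ^ 2 + C ((d 0 0 : ℝ) : ℂ) * X 0 * X 1 +
      C ((d 0 1 : ℝ) : ℂ) * X 0 ^ 2)

/-- `C̄₂(y₀,y₁)`: the coefficient of `x₁²` in `K̄`. -/
def Cbar2 : MvPolynomial (Fin 2) ℂ :=
  -(C ((t : ℝ) : ℂ)) *
    (C ((d (-1) (-1) : ℝ) : ℂ) * X 1 ^ 2 + C ((d (-1) 0 : ℝ) : ℂ) * X 0 * X 1 +
      C ((d (-1) 1 : ℝ) : ℂ) * X 0 ^ 2)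

/-- The discriminant `Δ₂(y₀,y₁) = B̄₂² - 4Ā₂C̄₂`, homogeneous of degree 4. -/
def Delta2 : MvPolynomial (Fin 2) ℂ :=
  Bbar2 d t ^ 2 - 4 * Abar2 d t * Cbar2 d t

/-- `[a:b] ∈ ℙ¹(ℂ)` is a double root of the homogeneous polynomial `p`:
`(bX - aY)²` divides `p(X,Y)`. -/
def IsDoubleRootAt (a b : ℂ) (p : MvPolynomial (Fin 2) ℂ) : Prop :=
  (C b * X 0 - C a * X 1) ^ 2 ∣ p

/-- The step set of the model is included in a closed half plane whose boundary passes
through the origin. -/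
def StepSetInHalfPlane : Prop :=
  ∃ u v : ℝ, (u, v) ≠ (0, 0) ∧
    ∀ i ∈ ({-1, 0, 1} : Set ℤ), ∀ j ∈ ({-1, 0, 1} : Set ℤ),
      (i, j) ≠ (0, 0) → d i j ≠ 0 → 0 ≤ u * (i : ℝ) + v * (j : ℝ)

/-- `α₂ = β₂` for the first family of (G0). -/
def alpha2 : ℝ := 1 - 2*t*(d 0 0) + t^2*(d 0 0)^2 - 4*t^2*(d (-1) 1)*(d 1 (-1))

/-- `α₃` for the first family of (G0). -/
def alpha3 : ℝ := 2*t^2*(d 1 0)*(d 0 0) - 2*t*(d 1 0) - 4*t^2*(d 0 1)*(d 1 (-1))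

/-- `α₄` for the first family of (G0). -/
def alpha4 : ℝ := t^2*((d 1 0)^2 - 4*(d 1 1)*(d 1 (-1)))

/-- `β₃` for the first family of (G0). -/
def beta3 : ℝ := 2*t^2*(d 0 1)*(d 0 0) - 2*t*(d 0 1) - 4*t^2*(d 1 0)*(d (-1) 1)

/-- `β₄` for the first family of (G0). -/
def beta4 : ℝ := t^2*((d 0 1)^2 - 4*(d 1 1)*(d (-1) 1))

/-- The kernel polynomial as a function `ℂ × ℂ → ℂ`:
`K(x,y,t) = xy - t Σ_{i,j=0}^{2} d_{i-1,j-1} x^i y^j`. -/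
def kernelKfun (x y : ℂ) : ℂ :=
  x * y - ((t : ℝ) : ℂ) *
    ∑ i ∈ Finset.range 3, ∑ j ∈ Finset.range 3,
      ((d ((i : ℤ) - 1) ((j : ℤ) - 1) : ℝ) : ℂ) * x ^ i * y ^ j


/-! ### Auxiliary lemmas for `factors_conjugation` -/

section Aux

lemma aux_poly3 (F : Subfield ℝ) (t : ℝ)
    (htr : ∀ p : Polynomial ℝ, (∀ n, p.coeff n ∈ F) → Polynomial.eval t p = 0 → p = 0)
    (a b c : ℝ) (ha : a ∈ F) (hb : b ∈ F) (hc : c ∈ F)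
    (hev : a + b * t + c * t ^ 2 = 0) : a = 0 ∧ b = 0 ∧ c = 0 := by
  set p : Polynomial ℝ := Polynomial.C a + Polynomial.C b * Polynomial.X +
    Polynomial.C c * Polynomial.X ^ 2 with hp
  have hcoeff : ∀ n, p.coeff n ∈ F := by
    intro n
    rcases n with _ | _ | _ | n <;>
      simp [hp, Polynomial.coeff_add, Polynomial.coeff_C, Polynomial.coeff_C_mul,
        Polynomial.coeff_X_pow, Polynomial.coeff_X, ha, hb, hc, F.zero_mem]
  have hev' : Polynomial.eval t p = 0 := by
    simp [hp]; linarith [hev]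
  have hp0 := htr p hcoeff hev'
  refine ⟨?_, ?_, ?_⟩
  · have := congrArg (fun q => Polynomial.coeff q 0) hp0
    simpa [hp, Polynomial.coeff_C, Polynomial.coeff_X_pow] using this
  · have := congrArg (fun q => Polynomial.coeff q 1) hp0
    simpa [hp, Polynomial.coeff_C, Polynomial.coeff_X_pow] using this
  · have := congrArg (fun q => Polynomial.coeff q 2) hp0
    simpa [hp, Polynomial.coeff_C, Polynomial.coeff_X_pow] using this

lemma aux_core (F : Subfield ℝ) (t : ℝ) (ht : t ≠ 0)
    (htr : ∀ p : Polynomial ℝ, (∀ n, p.coeff n ∈ F) → Polynomial.eval t p = 0 → p = 0)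
    (p0 p1 p2 q0 q1 q2 r0 : ℝ)
    (hp0 : p0 ∈ F) (hp1 : p1 ∈ F) (hp2 : p2 ∈ F)
    (hq0 : q0 ∈ F) (hq1 : q1 ∈ F) (hq2 : q2 ∈ F)
    (hrow : ¬(p0 = 0 ∧ p1 = 0 ∧ p2 = 0))
    (hcol : ¬(r0 = 0 ∧ q0 = 0 ∧ p0 = 0))
    (u : ℂ)
    (E2 : (p0 : ℂ) + p1 * u + p2 * u ^ 2 = 0)
    (E1 : u = (t : ℂ) * ((q0 : ℂ) + q1 * u + q2 * u ^ 2))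
    (E0 : u = 0 → r0 = 0) : False := by
  have htC : (t : ℂ) ≠ 0 := by exact_mod_cast ht
  by_cases hu : u = 0
  · subst hu
    have h2 : (p0 : ℂ) = 0 := by linear_combination E2
    have h1 : (q0 : ℂ) = 0 := by
      have : (t : ℂ) * (q0 : ℂ) = 0 := by linear_combination -E1
      exact (mul_eq_zero.mp this).resolve_left htC
    exact hcol ⟨E0 rfl, by exact_mod_cast h1, by exact_mod_cast h2⟩
  by_cases hp2' : p2 ≠ 0
  · have hp2C : (p2 : ℂ) ≠ 0 := by exact_mod_cast hp2'
    set c1 : ℝ := (q1 * p2 - q2 * p1) / p2 with hc1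
    set c0 : ℝ := (q0 * p2 - q2 * p0) / p2 with hc0
    have hc1F : c1 ∈ F := F.div_mem (F.sub_mem (F.mul_mem hq1 hp2) (F.mul_mem hq2 hp1)) hp2
    have hc0F : c0 ∈ F := F.div_mem (F.sub_mem (F.mul_mem hq0 hp2) (F.mul_mem hq2 hp0)) hp2
    have E1' : u * (1 - (t : ℂ) * c1) = (t : ℂ) * c0 := by
      have h1 : (c1 : ℂ) = (q1 * p2 - q2 * p1) / p2 := by push_cast [hc1]; ring
      have h0 : (c0 : ℂ) = (q0 * p2 - q2 * p0) / p2 := by push_cast [hc0]; ring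
      rw [h1, h0]
      field_simp
      linear_combination (p2 : ℂ) * E1 + (t : ℂ) * (q2 : ℂ) * E2
    by_cases h1z : 1 - t * c1 = 0
    · have := aux_poly3 F t htr (-1) c1 0 (F.neg_mem F.one_mem) hc1F F.zero_mem
        (by linarith)
      norm_num at this
    · have h1zC : (1 : ℂ) - (t : ℂ) * c1 ≠ 0 := by
        intro hcontra
        apply h1z
        have : ((1 - t * c1 : ℝ) : ℂ) = 0 := by push_cast; linear_combination hcontra
        exact_mod_cast this
      have hu' : u = (t : ℂ) * c0 / (1 - (t : ℂ) * c1) := by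
        field_simp
        linear_combination E1'
      have key : ((p0 : ℂ)) + (p1 * c0 - 2 * p0 * c1) * t +
          (p2 * c0 ^ 2 - p1 * c0 * c1 + p0 * c1 ^ 2) * (t : ℂ) ^ 2 = 0 := by
        have e2 : (p0 : ℂ) * (1 - (t:ℂ)*c1) ^ 2 + p1 * (u * (1 - (t:ℂ)*c1)) * (1 - (t:ℂ)*c1)
            + p2 * (u * (1 - (t:ℂ)*c1)) ^ 2 = 0 := by
          linear_combination (1 - (t:ℂ)*c1) ^ 2 * E2
        rw [E1'] at e2
        linear_combination e2
      have keyR : p0 + (p1 * c0 - 2 * p0 * c1) * t +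
          (p2 * c0 ^ 2 - p1 * c0 * c1 + p0 * c1 ^ 2) * t ^ 2 = 0 := by
        exact_mod_cast key
      have htwo : (2:ℝ) ∈ F := by
        have := F.add_mem F.one_mem F.one_mem
        rwa [one_add_one_eq_two] at this
      obtain ⟨hA, hB, hC⟩ := aux_poly3 F t htr p0 (p1 * c0 - 2 * p0 * c1)
        (p2 * c0 ^ 2 - p1 * c0 * c1 + p0 * c1 ^ 2) hp0
        (F.sub_mem (F.mul_mem hp1 hc0F) (F.mul_mem (F.mul_mem htwo hp0) hc1F))
        (F.add_mem (F.sub_mem (F.mul_mem hp2 (by rw [sq]; exact F.mul_mem hc0F hc0F))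
          (F.mul_mem (F.mul_mem hp1 hc0F) hc1F))
          (F.mul_mem hp0 (by rw [sq]; exact F.mul_mem hc1F hc1F))) (by linear_combination keyR)
      rw [hA] at hB hC
      have hpc : p1 * c0 = 0 := by linarith [hB]
      have hc0z : c0 = 0 := by
        have hpp : p2 * c0 ^ 2 = 0 := by linear_combination hC + c1 * hpc
        rcases mul_eq_zero.mp hpp with h | h
        · exact absurd h hp2'
        · exact pow_eq_zero_iff (by norm_num) |>.mp h
      apply hu
      rw [hu', hc0z]
      simp
  · push_neg at hp2'
    by_cases hp1' : p1 ≠ 0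
    · have hp1C : (p1 : ℂ) ≠ 0 := by exact_mod_cast hp1'
      set u0 : ℝ := -p0 / p1 with hu0def
      have hu0F : u0 ∈ F := F.div_mem (F.neg_mem hp0) hp1
      have E2' : (p0 : ℂ) + p1 * u = 0 := by
        rw [hp2'] at E2; push_cast at E2; linear_combination E2
      have huu : u = (u0 : ℂ) := by
        have : (u0 : ℂ) = -(p0:ℂ) / p1 := by push_cast [hu0def]; ring
        rw [this, eq_div_iff hp1C]
        linear_combination E2'
      set s : ℝ := q0 + q1 * u0 + q2 * u0 ^ 2 with hsdef
      have hsF : s ∈ F := F.add_mem (F.add_mem hq0 (F.mul_mem hq1 hu0F))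
        (F.mul_mem hq2 (by rw [sq]; exact F.mul_mem hu0F hu0F))
      have hsC : (u0 : ℂ) = (t : ℂ) * (s : ℂ) := by
        rw [huu] at E1; rw [hsdef]; push_cast; linear_combination E1
      have hE1R : -u0 + s * t = 0 := by
        have h' : ((-u0 + s * t : ℝ) : ℂ) = 0 := by push_cast; linear_combination -hsC
        exact_mod_cast h'
      obtain ⟨hA, hB, _⟩ := aux_poly3 F t htr (-u0) s 0 (F.neg_mem hu0F) hsF F.zero_mem
        (by linarith)
      have hu0z : u0 = 0 := by linarith
      exact hu ((huu.trans (by rw [hu0z]; simp)))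
    · push_neg at hp1'
      have : (p0 : ℂ) = 0 := by
        rw [hp1', hp2'] at E2; push_cast at E2; linear_combination E2
      exact hrow ⟨by exact_mod_cast this, hp1', hp2'⟩

lemma kernelKfun_eq (x y : ℂ) : kernelKfun d t x y =
    x * y - (t : ℂ) * (((d (-1) (-1) : ℝ) : ℂ) + (d (-1) 0 : ℝ) * y + (d (-1) 1 : ℝ) * y ^ 2
      + (d 0 (-1) : ℝ) * x + (d 0 0 : ℝ) * x * y + (d 0 1 : ℝ) * x * y ^ 2
      + (d 1 (-1) : ℝ) * x ^ 2 + (d 1 0 : ℝ) * x ^ 2 * y + (d 1 1 : ℝ) * x ^ 2 * y ^ 2) := by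
  simp only [kernelKfun, Finset.sum_range_succ, Finset.sum_range_zero,
    Nat.cast_zero, Nat.cast_one, Nat.cast_ofNat]
  norm_num only
  ring

lemma eval_kernelK (x y : ℂ) : eval ![x, y] (kernelK d t) = kernelKfun d t x y := by
  simp [kernelK, kernelKfun]

lemma conj_kernelK : MvPolynomial.map (starRingEnd ℂ) (kernelK d t) = kernelK d t := by
  simp [kernelK, map_sum, Complex.conj_ofReal]

lemma root_y_eqs (ht : (t : ℂ) ≠ 0) (y₀ : ℂ) (hv : ∀ x : ℂ, kernelKfun d t x y₀ = 0) :
    (((d 1 (-1) : ℝ) : ℂ) + (d 1 0 : ℝ) * y₀ + (d 1 1 : ℝ) * y₀ ^ 2 = 0) ∧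
    (y₀ = (t : ℂ) * (((d 0 (-1) : ℝ) : ℂ) + (d 0 0 : ℝ) * y₀ + (d 0 1 : ℝ) * y₀ ^ 2)) ∧
    (((d (-1) (-1) : ℝ) : ℂ) + (d (-1) 0 : ℝ) * y₀ + (d (-1) 1 : ℝ) * y₀ ^ 2 = 0) := by
  have h0 := hv 0; have h1 := hv 1; have hm := hv (-1)
  rw [kernelKfun_eq] at h0 h1 hm
  refine ⟨?_, ?_, ?_⟩
  · have hA : (t : ℂ) * (((d 1 (-1) : ℝ) : ℂ) + (d 1 0 : ℝ) * y₀ + (d 1 1 : ℝ) * y₀ ^ 2) = 0 := by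
      linear_combination (-(1/2 : ℂ)) * h1 + (-(1/2 : ℂ)) * hm + h0
    exact (mul_eq_zero.mp hA).resolve_left ht
  · linear_combination (1/2 : ℂ) * h1 - (1/2 : ℂ) * hm
  · have hA : (t : ℂ) * (((d (-1) (-1) : ℝ) : ℂ) + (d (-1) 0 : ℝ) * y₀
        + (d (-1) 1 : ℝ) * y₀ ^ 2) = 0 := by
      linear_combination -h0
    exact (mul_eq_zero.mp hA).resolve_left ht

lemma dvd_y_eval (y₀ : ℂ) (hdvd : (X 1 - C y₀) ∣ kernelK d t) :
    ∀ x : ℂ, kernelKfun d t x y₀ = 0 := by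
  intro x
  obtain ⟨w, hw⟩ := hdvd
  have := congrArg (eval ![x, y₀]) hw
  rw [eval_kernelK] at this
  simpa using this

lemma no_lin_y (h : WalkHyp d t)
    (hx2 : ¬ (d 1 (-1) = 0 ∧ d 1 0 = 0 ∧ d 1 1 = 0))
    (hy0 : ¬ (d (-1) (-1) = 0 ∧ d 0 (-1) = 0 ∧ d 1 (-1) = 0))
    (y₀ : ℂ) (hdvd : (X 1 - C y₀) ∣ kernelK d t) : False := by
  have ht : t ≠ 0 := ne_of_gt h.2.2.1.1
  have htC : (t : ℂ) ≠ 0 := by exact_mod_cast ht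
  obtain ⟨E2, E1, E0⟩ := root_y_eqs d t htC y₀ (dvd_y_eval d t y₀ hdvd)
  set F := Subfield.closure
      {x : ℝ | ∃ i ∈ ({-1, 0, 1} : Set ℤ), ∃ j ∈ ({-1, 0, 1} : Set ℤ), x = d i j} with hFdef
  have hF : ∀ i j : ℤ, i ∈ ({-1, 0, 1} : Set ℤ) → j ∈ ({-1, 0, 1} : Set ℤ) → d i j ∈ F :=
    fun i j hi hj => Subfield.subset_closure ⟨i, hi, j, hj, rfl⟩
  exact aux_core F t ht h.2.2.2
    (d 1 (-1)) (d 1 0) (d 1 1) (d 0 (-1)) (d 0 0) (d 0 1) (d (-1) (-1))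
    (hF _ _ (by norm_num) (by norm_num)) (hF _ _ (by norm_num) (by norm_num))
    (hF _ _ (by norm_num) (by norm_num)) (hF _ _ (by norm_num) (by norm_num))
    (hF _ _ (by norm_num) (by norm_num)) (hF _ _ (by norm_num) (by norm_num))
    hx2 hy0 y₀ E2 E1
    (by intro hy; rw [hy] at E0; exact_mod_cast (by simpa using E0 : ((d (-1) (-1) : ℝ) : ℂ) = 0))

lemma deg0_mul (p q : MvPolynomial (Fin 2) ℂ) (hp : p ≠ 0) (hq : q ≠ 0) :
    degreeOf 0 (p * q) = degreeOf 0 p + degreeOf 0 q := by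
  have inj := (MvPolynomial.finSuccEquiv ℂ 1).injective
  have hp' : MvPolynomial.finSuccEquiv ℂ 1 p ≠ 0 := by
    intro hc; exact hp (by apply inj; simpa using hc)
  have hq' : MvPolynomial.finSuccEquiv ℂ 1 q ≠ 0 := by
    intro hc; exact hq (by apply inj; simpa using hc)
  rw [← natDegree_finSuccEquiv, ← natDegree_finSuccEquiv, ← natDegree_finSuccEquiv, map_mul]
  exact Polynomial.natDegree_mul hp' hq'

lemma deg1_eq_deg0_swap (p : MvPolynomial (Fin 2) ℂ) :
    degreeOf 1 p = degreeOf 0 (rename (Equiv.swap (0 : Fin 2) 1) p) := by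
  have := MvPolynomial.degreeOf_rename_of_injective
    (p := p) (f := Equiv.swap (0 : Fin 2) 1) (Equiv.injective _) 1
  rw [Equiv.swap_apply_right] at this
  exact this.symm

lemma deg1_mul (p q : MvPolynomial (Fin 2) ℂ) (hp : p ≠ 0) (hq : q ≠ 0) :
    degreeOf 1 (p * q) = degreeOf 1 p + degreeOf 1 q := by
  have hinj := rename_injective (R := ℂ) (Equiv.swap (0:Fin 2) 1) (Equiv.injective _)
  have hp' : rename (Equiv.swap (0:Fin 2) 1) p ≠ 0 := by
    intro hc; exact hp (by apply hinj; simpa using hc)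
  have hq' : rename (Equiv.swap (0:Fin 2) 1) q ≠ 0 := by
    intro hc; exact hq (by apply hinj; simpa using hc)
  rw [deg1_eq_deg0_swap, deg1_eq_deg0_swap p, deg1_eq_deg0_swap q, map_mul]
  exact deg0_mul _ _ hp' hq'

lemma eq_C_of_deg (p : MvPolynomial (Fin 2) ℂ) (h0 : degreeOf 0 p = 0)
    (h1 : degreeOf 1 p = 0) : p = C (coeff 0 p) := by
  apply MvPolynomial.ext
  intro m
  by_cases hm : m = 0
  · subst hm; simp
  · rw [coeff_C, if_neg fun hc => hm hc.symm]
    by_contra hc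
    have hms : m ∈ p.support := mem_support_iff.mpr hc
    have hx0 : m 0 = 0 := Nat.le_zero.mp (degreeOf_le_iff.mp h0.le m hms)
    have hx1 : m 1 = 0 := Nat.le_zero.mp (degreeOf_le_iff.mp h1.le m hms)
    apply hm
    ext x
    fin_cases x
    · simpa using hx0
    · simpa using hx1

lemma unit_is_C (u : MvPolynomial (Fin 2) ℂ) (hu : IsUnit u) :
    ∃ c : ℂ, c ≠ 0 ∧ u = C c := by
  obtain ⟨v, hv⟩ := IsUnit.exists_right_inv hu
  have hu0 : u ≠ 0 := fun hc => by simp [hc] at hv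
  have hv0 : v ≠ 0 := fun hc => by simp [hc] at hv
  have h0 : degreeOf 0 u = 0 := by
    have := deg0_mul u v hu0 hv0
    rw [hv] at this
    have h1 : degreeOf 0 (1 : MvPolynomial (Fin 2) ℂ) = 0 := by
      rw [show (1 : MvPolynomial (Fin 2) ℂ) = C 1 by simp]; exact degreeOf_C _ _
    omega
  have h1 : degreeOf 1 u = 0 := by
    have := deg1_mul u v hu0 hv0
    rw [hv] at this
    have h1 : degreeOf 1 (1 : MvPolynomial (Fin 2) ℂ) = 0 := by
      rw [show (1 : MvPolynomial (Fin 2) ℂ) = C 1 by simp]; exact degreeOf_C _ _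
    omega
  refine ⟨coeff 0 u, ?_, eq_C_of_deg u h0 h1⟩
  intro hc
  exact hu0 (by rw [eq_C_of_deg u h0 h1, hc]; simp)

lemma not_unit_of_totalDegree (p : MvPolynomial (Fin 2) ℂ) (hp : p.totalDegree ≠ 0) :
    ¬ IsUnit p := by
  intro hu
  obtain ⟨c, _, hc⟩ := unit_is_C p hu
  exact hp (by rw [hc]; exact totalDegree_C c)

lemma degreeOf_neg' (i : Fin 2) (p : MvPolynomial (Fin 2) ℂ) :
    degreeOf i (-p) = degreeOf i p := by
  simp [degreeOf_eq_sup, support_neg]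

lemma deg0_kernelK : degreeOf 0 (kernelK d t) ≤ 2 := by
  rw [kernelK, sub_eq_add_neg]
  refine le_trans (degreeOf_add_le _ _ _) ?_
  rw [max_le_iff]
  constructor
  · refine le_trans (degreeOf_mul_le _ _ _) ?_
    simp [degreeOf_X]
  · rw [degreeOf_neg']
    refine le_trans (degreeOf_mul_le _ _ _) ?_
    rw [degreeOf_C, zero_add]
    refine le_trans (degreeOf_sum_le _ _ _) ?_
    refine Finset.sup_le fun i hi => ?_
    refine le_trans (degreeOf_sum_le _ _ _) ?_
    refine Finset.sup_le fun j _ => ?_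
    refine le_trans (degreeOf_mul_le _ _ _) ?_
    have h1 : degreeOf 0 (C ((d ((i : ℤ) - 1) ((j : ℤ) - 1) : ℝ) : ℂ) *
        X (0 : Fin 2) ^ i) ≤ i := by
      refine le_trans (degreeOf_mul_le _ _ _) ?_
      rw [degreeOf_C, zero_add]
      refine le_trans (degreeOf_pow_le _ _ _) ?_
      simp [degreeOf_X]
    have h2 : degreeOf 0 (X (1 : Fin 2) ^ j : MvPolynomial (Fin 2) ℂ) = 0 := by
      refine Nat.le_zero.mp (le_trans (degreeOf_pow_le _ _ _) ?_)
      simp [degreeOf_X]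
    have : i ≤ 2 := by
      have := Finset.mem_range.mp hi; omega
    omega

lemma univar_linear_y (g : MvPolynomial (Fin 2) ℂ) (hg0 : g ≠ 0) (hgu : ¬ IsUnit g)
    (hdeg : degreeOf 0 g = 0) : ∃ y₀ : ℂ, (X 1 - C y₀) ∣ g := by
  set Ψ : MvPolynomial (Fin 2) ℂ →ₐ[ℂ] Polynomial ℂ :=
    MvPolynomial.aeval ![0, Polynomial.X] with hΨ
  set Φ : Polynomial ℂ →ₐ[ℂ] MvPolynomial (Fin 2) ℂ :=
    Polynomial.aeval (X 1 : MvPolynomial (Fin 2) ℂ) with hΦ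
  have hm1 : ∀ m ∈ g.support, m 0 = 0 := fun m hm =>
    Nat.le_zero.mp (degreeOf_le_iff.mp hdeg.le m hm)
  have hID : Φ (Ψ g) = g := by
    have key : Φ (Ψ (∑ m ∈ g.support, monomial m (coeff m g))) =
        ∑ m ∈ g.support, monomial m (coeff m g) := by
      rw [map_sum, map_sum]
      refine Finset.sum_congr rfl fun m hm => ?_
      have h1 := hm1 m hm
      have hprod : (monomial m (coeff m g)) =
          C (coeff m g) * X 0 ^ (m 0) * X 1 ^ (m 1) := by
        rw [monomial_eq, Finsupp.prod_fintype _ _ (fun i => pow_zero _), Fin.prod_univ_two,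
          mul_assoc]
      rw [hprod, h1, pow_zero, mul_one]
      rw [map_mul, map_mul, map_pow, map_pow]
      simp [hΨ, hΦ, algebraMap_eq]
    rw [← g.as_sum] at key
    exact key
  set G : Polynomial ℂ := Ψ g with hG
  have hG0 : G ≠ 0 := by
    intro hc
    rw [← hID, hc, map_zero] at hg0
    exact hg0 rfl
  have hdG : G.natDegree ≠ 0 := by
    intro hc
    obtain ⟨a, ha⟩ := Polynomial.natDegree_eq_zero.mp hc
    have : g = C a := by rw [← hID, ← ha]; simp [hΦ, algebraMap_eq]
    have ha0 : a ≠ 0 := fun hc' => hg0 (by rw [this, hc']; simp)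
    exact hgu (by rw [this]; exact ha0.isUnit.map (C : ℂ →+* MvPolynomial (Fin 2) ℂ))
  obtain ⟨z, hz⟩ := Complex.exists_root (Polynomial.natDegree_pos_iff_degree_pos.mp
    (Nat.pos_of_ne_zero hdG))
  refine ⟨z, ?_⟩
  have hdvd : Polynomial.X - Polynomial.C z ∣ G := (Polynomial.dvd_iff_isRoot).mpr hz
  have := map_dvd Φ hdvd
  rw [hID] at this
  simpa [hΦ, algebraMap_eq] using this

lemma conj_conj_poly (p : MvPolynomial (Fin 2) ℂ) :
    MvPolynomial.map (starRingEnd ℂ) (MvPolynomial.map (starRingEnd ℂ) p) = p := by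
  rw [MvPolynomial.map_map]
  have h : (starRingEnd ℂ).comp (starRingEnd ℂ) = RingHom.id ℂ :=
    RingHom.ext fun z => Complex.conj_conj z
  rw [h, MvPolynomial.map_id]

lemma conj_unit_aux (p : MvPolynomial (Fin 2) ℂ)
    (hp : IsUnit (MvPolynomial.map (starRingEnd ℂ) p)) : IsUnit p := by
  obtain ⟨c, hc0, hc⟩ := unit_is_C _ hp
  have : p = C ((starRingEnd ℂ) c) := by
    rw [← conj_conj_poly p, hc, MvPolynomial.map_C]
  rw [this]
  exact (star_ne_zero.mpr hc0).isUnit.map (C : ℂ →+* MvPolynomial (Fin 2) ℂ)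

lemma irred_conj (p : MvPolynomial (Fin 2) ℂ) (hp : Irreducible p) :
    Irreducible (MvPolynomial.map (starRingEnd ℂ) p) := by
  constructor
  · intro hu
    exact hp.not_isUnit (conj_unit_aux p hu)
  · intro a b hab
    have h : p = MvPolynomial.map (starRingEnd ℂ) a * MvPolynomial.map (starRingEnd ℂ) b := by
      rw [← conj_conj_poly p, hab, map_mul]
    rcases hp.2 h with h' | h'
    · exact Or.inl (conj_unit_aux a h')
    · exact Or.inr (conj_unit_aux b h')

end Aux

/-- if the weights along each of the four boundary lines are not all zero
and `K = -f₁·f₂` with `f₁, f₂` nonconstant, then after rescaling `g₁ = c·f₁`,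
`g₂ = c⁻¹·f₂` (`c ≠ 0`), either the coefficientwise conjugate of `g₁` is `g₂`,
or it is `-g₂`, or both `g₁` and `g₂` have real coefficients. -/
theorem factors_conjugation (h : WalkHyp d t)
    (hx2 : ¬ (d 1 (-1) = 0 ∧ d 1 0 = 0 ∧ d 1 1 = 0))
    (hx0 : ¬ (d (-1) (-1) = 0 ∧ d (-1) 0 = 0 ∧ d (-1) 1 = 0))
    (hy2 : ¬ (d (-1) 1 = 0 ∧ d 0 1 = 0 ∧ d 1 1 = 0))
    (hy0 : ¬ (d (-1) (-1) = 0 ∧ d 0 (-1) = 0 ∧ d 1 (-1) = 0))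
    (f₁ f₂ : MvPolynomial (Fin 2) ℂ)
    (hf₁ : f₁.totalDegree ≠ 0) (hf₂ : f₂.totalDegree ≠ 0)
    (hK : kernelK d t = -(f₁ * f₂)) :
    ∃ c : ℂ, c ≠ 0 ∧
      (MvPolynomial.map (starRingEnd ℂ) (C c * f₁) = C c⁻¹ * f₂ ∨
       MvPolynomial.map (starRingEnd ℂ) (C c * f₁) = -(C c⁻¹ * f₂) ∨
       ((∀ m : Fin 2 →₀ ℕ, ((C c * f₁).coeff m).im = 0) ∧
        (∀ m : Fin 2 →₀ ℕ, ((C c⁻¹ * f₂).coeff m).im = 0))) := by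
  classical
  have f1ne : f₁ ≠ 0 := fun hc => hf₁ (by rw [hc]; exact totalDegree_zero)
  have f2ne : f₂ ≠ 0 := fun hc => hf₂ (by rw [hc]; exact totalDegree_zero)
  have hKne : kernelK d t ≠ 0 := by
    rw [hK]; exact neg_ne_zero.mpr (mul_ne_zero f1ne f2ne)
  have hnegK : f₁ * f₂ = -(kernelK d t) := by rw [hK, neg_neg]
  have hfact : ∀ g : MvPolynomial (Fin 2) ℂ, g ∣ kernelK d t → ¬ IsUnit g →
      degreeOf 0 g ≠ 0 := by
    intro g hg hgu h0
    have hgne : g ≠ 0 := fun hc => hKne (zero_dvd_iff.mp (hc ▸ hg))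
    obtain ⟨y₀, hlin⟩ := univar_linear_y g hgne hgu h0
    exact no_lin_y d t h hx2 hy0 y₀ (hlin.trans hg)
  have hdvd₁ : f₁ ∣ kernelK d t := ⟨-f₂, by rw [hK]; ring⟩
  have hdvd₂ : f₂ ∣ kernelK d t := ⟨-f₁, by rw [hK]; ring⟩
  have hnu₁ : ¬ IsUnit f₁ := not_unit_of_totalDegree f₁ hf₁
  have hnu₂ : ¬ IsUnit f₂ := not_unit_of_totalDegree f₂ hf₂
  have hdegK : degreeOf 0 f₁ + degreeOf 0 f₂ ≤ 2 := by
    rw [← deg0_mul f₁ f₂ f1ne f2ne, hnegK, degreeOf_neg']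
    exact deg0_kernelK d t
  have hd₁ : degreeOf 0 f₁ ≠ 0 := hfact f₁ hdvd₁ hnu₁
  have hd₂ : degreeOf 0 f₂ ≠ 0 := hfact f₂ hdvd₂ hnu₂
  have irr₁ : Irreducible f₁ := by
    refine ⟨hnu₁, fun a b hab => ?_⟩
    by_contra hcon
    push_neg at hcon
    obtain ⟨hua, hub⟩ := hcon
    have hane : a ≠ 0 := fun hc => f1ne (by rw [hab, hc, zero_mul])
    have hbne : b ≠ 0 := fun hc => f1ne (by rw [hab, hc, mul_zero])
    have hda : degreeOf 0 a ≠ 0 := hfact a (dvd_trans ⟨b, hab⟩ hdvd₁) hua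
    have hdb : degreeOf 0 b ≠ 0 :=
      hfact b (dvd_trans ⟨a, by rw [hab, mul_comm]⟩ hdvd₁) hub
    have : degreeOf 0 f₁ = degreeOf 0 a + degreeOf 0 b := by
      rw [hab]; exact deg0_mul a b hane hbne
    omega
  have irr₂ : Irreducible f₂ := by
    refine ⟨hnu₂, fun a b hab => ?_⟩
    by_contra hcon
    push_neg at hcon
    obtain ⟨hua, hub⟩ := hcon
    have hane : a ≠ 0 := fun hc => f2ne (by rw [hab, hc, zero_mul])
    have hbne : b ≠ 0 := fun hc => f2ne (by rw [hab, hc, mul_zero])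
    have hda : degreeOf 0 a ≠ 0 := hfact a (dvd_trans ⟨b, hab⟩ hdvd₂) hua
    have hdb : degreeOf 0 b ≠ 0 :=
      hfact b (dvd_trans ⟨a, by rw [hab, mul_comm]⟩ hdvd₂) hub
    have : degreeOf 0 f₂ = degreeOf 0 a + degreeOf 0 b := by
      rw [hab]; exact deg0_mul a b hane hbne
    omega
  have hprod : MvPolynomial.map (starRingEnd ℂ) f₁ * MvPolynomial.map (starRingEnd ℂ) f₂ =
      f₁ * f₂ := by
    have h1 := conj_kernelK d t
    rw [hK, map_neg, map_mul] at h1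
    exact neg_injective h1
  have irrc : Irreducible (MvPolynomial.map (starRingEnd ℂ) f₁) := irred_conj f₁ irr₁
  have hPrime : Prime (MvPolynomial.map (starRingEnd ℂ) f₁) :=
    (UniqueFactorizationMonoid.irreducible_iff_prime).mp irrc
  have hdvdP : MvPolynomial.map (starRingEnd ℂ) f₁ ∣ f₁ * f₂ :=
    ⟨MvPolynomial.map (starRingEnd ℂ) f₂, hprod.symm⟩
  rcases hPrime.2.2 f₁ f₂ hdvdP with hca | hcb
  · -- `conj f₁` is associated to `f₁` : both factors can be made real
    obtain ⟨u, hu⟩ := irrc.associated_of_dvd irr₁ hca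
    obtain ⟨μ, hμ0, hμC⟩ := unit_is_C _ u.isUnit
    have hν : MvPolynomial.map (starRingEnd ℂ) f₁ = C μ⁻¹ * f₁ := by
      have h' := congrArg (fun z => z * C μ⁻¹) hu
      rw [hμC, mul_assoc, ← C_mul, mul_inv_cancel₀ hμ0, C_1, mul_one] at h'
      rw [h', mul_comm]
    have hcc : (starRingEnd ℂ) μ⁻¹ * μ⁻¹ = 1 := by
      have h2 := congrArg (MvPolynomial.map (starRingEnd ℂ)) hν
      rw [conj_conj_poly, map_mul, MvPolynomial.map_C, hν] at h2
      have h3 : (C ((starRingEnd ℂ) μ⁻¹ * μ⁻¹) - 1) * f₁ = 0 := by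
        rw [C_mul]; linear_combination -h2
      rcases mul_eq_zero.mp h3 with h4 | h4
      · rw [sub_eq_zero] at h4
        have := (MvPolynomial.C_injective (Fin 2) ℂ) (h4.trans C_1.symm)
        exact this
      · exact absurd h4 f1ne
    have hνne : μ⁻¹ ≠ 0 := inv_ne_zero hμ0
    obtain ⟨c, hc2⟩ := IsAlgClosed.exists_pow_nat_eq (μ⁻¹ : ℂ) (n := 2) (by norm_num)
    have hcne : c ≠ 0 := by
      intro hc0
      apply hνne
      rw [← hc2, hc0]
      ring
    have hccl : (starRingEnd ℂ) c * c = 1 := by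
      have h6 : (starRingEnd ℂ) c * c = (Complex.normSq c : ℂ) := by
        rw [mul_comm, Complex.mul_conj]
      have h5 : ((starRingEnd ℂ) c * c) ^ 2 = 1 := by
        rw [mul_pow, ← map_pow, hc2]; exact hcc
      rw [h6] at h5 ⊢
      have h7 : (Complex.normSq c) ^ 2 = 1 := by exact_mod_cast h5
      have hpos := Complex.normSq_nonneg c
      have h8 : Complex.normSq c = 1 := by nlinarith
      rw [h8]; norm_num
    have hν₂ : MvPolynomial.map (starRingEnd ℂ) f₂ = C μ * f₂ := by
      have h7 : f₁ * (C μ⁻¹ * MvPolynomial.map (starRingEnd ℂ) f₂) = f₁ * f₂ := by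
        rw [hν] at hprod
        linear_combination hprod
      have h8 := mul_left_cancel₀ f1ne h7
      have h9 := congrArg (fun z => C μ * z) h8
      rw [← mul_assoc, ← C_mul, mul_inv_cancel₀ hμ0, C_1, one_mul] at h9
      exact h9
    refine ⟨c, hcne, Or.inr (Or.inr ⟨?_, ?_⟩)⟩
    · have hfix : MvPolynomial.map (starRingEnd ℂ) (C c * f₁) = C c * f₁ := by
        rw [map_mul, MvPolynomial.map_C, hν, ← mul_assoc, ← C_mul]
        have hval : (starRingEnd ℂ) c * μ⁻¹ = c := by
          rw [← hc2]
          linear_combination c * hccl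
        rw [hval]
      intro m
      have hco := congrArg (coeff m) hfix
      rw [MvPolynomial.coeff_map] at hco
      exact Complex.conj_eq_iff_im.mp hco
    · have hfix : MvPolynomial.map (starRingEnd ℂ) (C c⁻¹ * f₂) = C c⁻¹ * f₂ := by
        rw [map_mul, MvPolynomial.map_C, hν₂, ← mul_assoc, ← C_mul]
        have hval : (starRingEnd ℂ) c⁻¹ * μ = c⁻¹ := by
          have hμeq : μ = (c ^ 2)⁻¹ := by rw [hc2, inv_inv]
          rw [map_inv₀, hμeq, ← mul_inv,
            show (starRingEnd ℂ) c * c ^ 2 = c by linear_combination c * hccl]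
        rw [hval]
      intro m
      have hco := congrArg (coeff m) hfix
      rw [MvPolynomial.coeff_map] at hco
      exact Complex.conj_eq_iff_im.mp hco
  · -- `conj f₁` is associated to `f₂`
    obtain ⟨u, hu⟩ := irrc.associated_of_dvd irr₂ hcb
    obtain ⟨μ, hμ0, hμC⟩ := unit_is_C _ u.isUnit
    have hlam : MvPolynomial.map (starRingEnd ℂ) f₁ = C μ⁻¹ * f₂ := by
      have h' := congrArg (fun z => z * C μ⁻¹) hu
      rw [hμC, mul_assoc, ← C_mul, mul_inv_cancel₀ hμ0, C_1, mul_one] at h'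
      rw [h', mul_comm]
    have hlam₂ : MvPolynomial.map (starRingEnd ℂ) f₂ = C μ * f₁ := by
      have h7 : (C μ⁻¹ * MvPolynomial.map (starRingEnd ℂ) f₂) * f₂ = f₁ * f₂ := by
        rw [hlam] at hprod
        linear_combination hprod
      have h8 := mul_right_cancel₀ f2ne h7
      have h9 := congrArg (fun z => C μ * z) h8
      rw [← mul_assoc, ← C_mul, mul_inv_cancel₀ hμ0, C_1, one_mul] at h9
      exact h9
    have hreal : (starRingEnd ℂ) μ⁻¹ * μ = 1 := by
      have h2 := congrArg (MvPolynomial.map (starRingEnd ℂ)) hlam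
      rw [conj_conj_poly, map_mul, MvPolynomial.map_C, hlam₂] at h2
      have h3 : (C ((starRingEnd ℂ) μ⁻¹ * μ) - 1) * f₁ = 0 := by
        rw [C_mul]; linear_combination -h2
      rcases mul_eq_zero.mp h3 with h4 | h4
      · rw [sub_eq_zero] at h4
        exact (MvPolynomial.C_injective (Fin 2) ℂ) (h4.trans C_1.symm)
      · exact absurd h4 f1ne
    have hμreal : (starRingEnd ℂ) μ⁻¹ = μ⁻¹ := by
      have : (starRingEnd ℂ) μ⁻¹ = μ⁻¹ * ((starRingEnd ℂ) μ⁻¹ * μ) := by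
        field_simp
      rw [hreal, mul_one] at this
      exact this
    set a : ℝ := (μ⁻¹ : ℂ).re with ha
    have haeq : (a : ℂ) = μ⁻¹ := Complex.conj_eq_iff_re.mp hμreal
    have ha0 : a ≠ 0 := by
      intro hc
      rw [hc] at haeq
      exact (inv_ne_zero hμ0) (by exact_mod_cast haeq.symm)
    rcases ha0.lt_or_gt with hlt | hgt
    · -- a < 0 : second alternative
      have hsq : Real.sqrt (-a) ≠ 0 := (Real.sqrt_pos.mpr (by linarith)).ne'
      set r : ℝ := (Real.sqrt (-a))⁻¹ with hr
      have hrne : r ≠ 0 := inv_ne_zero hsq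
      refine ⟨(r : ℂ), by exact_mod_cast hrne, Or.inr (Or.inl ?_)⟩
      rw [map_mul, MvPolynomial.map_C, hlam, ← mul_assoc, ← C_mul]
      have hval : (starRingEnd ℂ) (r : ℂ) * μ⁻¹ = -(((r : ℂ))⁻¹) := by
        rw [Complex.conj_ofReal, ← haeq]
        have hrreal : r * a = -(r⁻¹) := by
          rw [hr, inv_inv]
          have hm : Real.sqrt (-a) * Real.sqrt (-a) = -a :=
            Real.mul_self_sqrt (by linarith)
          rw [inv_mul_eq_div, div_eq_iff hsq]
          linarith [hm]
        calc ((r : ℂ)) * ((a : ℂ)) = ((r * a : ℝ) : ℂ) := by push_cast; ring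
          _ = ((-(r⁻¹) : ℝ) : ℂ) := by rw [hrreal]
          _ = -(((r : ℂ))⁻¹) := by push_cast; ring
      rw [hval]
      rw [map_neg, neg_mul]
    · -- a > 0 : first alternative
      have hsq : Real.sqrt a ≠ 0 := (Real.sqrt_pos.mpr hgt).ne'
      set r : ℝ := (Real.sqrt a)⁻¹ with hr
      have hrne : r ≠ 0 := inv_ne_zero hsq
      refine ⟨(r : ℂ), by exact_mod_cast hrne, Or.inl ?_⟩
      rw [map_mul, MvPolynomial.map_C, hlam, ← mul_assoc, ← C_mul]
      have hval : (starRingEnd ℂ) (r : ℂ) * μ⁻¹ = ((r : ℂ))⁻¹ := by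
        rw [Complex.conj_ofReal, ← haeq]
        have hrreal : r * a = r⁻¹ := by
          rw [hr, inv_inv]
          have hm : Real.sqrt a * Real.sqrt a = a := Real.mul_self_sqrt hgt.le
          rw [inv_mul_eq_div, div_eq_iff hsq]
          linarith [hm]
        calc ((r : ℂ)) * ((a : ℂ)) = ((r * a : ℝ) : ℂ) := by push_cast; ring
          _ = ((r⁻¹ : ℝ) : ℂ) := by rw [hrreal]
          _ = ((r : ℂ))⁻¹ := by push_cast; ring
      rw [hval]


end
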